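/- Let X be a chain complex of right R-modules and Y a chain complex of left R-modules, with either X bounded on the right or Y bounded on the left. If the complex X_l ⊗_R Y is exact for every l ∈ ℤ, then the total tensor complex X ⊗_R Y is exact. -/

import Mathlib

open CategoryTheory Limits TensorProduct

/-- The double complex with `(p, q)`-entry `X_p ⊗[R] Y_q`; its total complex is the
total tensor product complex `X ⊗_R Y`. -/
noncomputable def tensorBicomplex (R : Type) [CommRing R]
    (X Y : CochainComplex (ModuleCat.{0} R) ℤ) :
    HomologicalComplex (CochainComplex (ModuleCat.{0} R) ℤ) (ComplexShape.up ℤ) where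
  X p :=
    { X := fun q => ModuleCat.of R (X.X p ⊗[R] Y.X q)
      d := fun q q' => ModuleCat.ofHom (LinearMap.lTensor (X.X p) (Y.d q q').hom)
      shape := fun q q' h => by
        ext1
        simp [Y.shape q q' h]
      d_comp_d' := fun i j k _ _ => by
        ext1
        simp only [ModuleCat.hom_comp, ModuleCat.hom_ofHom, ModuleCat.hom_zero]
        rw [← LinearMap.lTensor_comp, ← ModuleCat.hom_comp, Y.d_comp_d, ModuleCat.hom_zero,
          LinearMap.lTensor_zero] }
  d p p' :=
    { f := fun q => ModuleCat.ofHom (LinearMap.rTensor (Y.X q) (X.d p p').hom)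
      comm' := fun i j _ => by
        ext1
        simp only [ModuleCat.hom_comp, ModuleCat.hom_ofHom]
        rw [LinearMap.lTensor_comp_rTensor, LinearMap.rTensor_comp_lTensor] }
  shape := fun p p' h => by
    ext q : 1
    ext1
    simp [X.shape p p' h]
  d_comp_d' := fun i j k _ _ => by
    ext q : 1
    have h1 : (LinearMap.rTensor (R := R) (Y.X q) (X.d j k).hom).comp
        (LinearMap.rTensor (Y.X q) (X.d i j).hom) = 0 := by
      rw [← LinearMap.rTensor_comp, ← ModuleCat.hom_comp, X.d_comp_d, ModuleCat.hom_zero,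
        LinearMap.rTensor_zero]
    ext1
    exact h1


/-- The total tensor product complex `X ⊗_R Y` of two complexes, obtained as the
total complex of the double complex of componentwise tensor products. -/
noncomputable def tensorComplex (R : Type) [CommRing R]
    (X Y : CochainComplex (ModuleCat.{0} R) ℤ) :
    CochainComplex (ModuleCat.{0} R) ℤ :=
  HomologicalComplex₂.total (tensorBicomplex R X Y) (ComplexShape.up ℤ)

/-- The morphism of double complexes `V ⊗ A ⟶ W ⊗ A` induced by `φ : V ⟶ W`. -/
noncomputable def tensorBicomplexMap (R : Type) [CommRing R]
    {V W : CochainComplex (ModuleCat.{0} R) ℤ} (φ : V ⟶ W)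
    (A : CochainComplex (ModuleCat.{0} R) ℤ) :
    tensorBicomplex R V A ⟶ tensorBicomplex R W A where
  f p :=
    { f := fun q => ModuleCat.ofHom (LinearMap.rTensor (A.X q) (φ.f p).hom)
      comm' := fun i j _ => by
        have h : (LinearMap.lTensor (W.X p) (A.d i j).hom).comp
            (LinearMap.rTensor (A.X i) (φ.f p).hom) =
          (LinearMap.rTensor (A.X j) (φ.f p).hom).comp
            (LinearMap.lTensor (V.X p) (A.d i j).hom) := by
          rw [LinearMap.lTensor_comp_rTensor, LinearMap.rTensor_comp_lTensor]
        ext1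
        exact h }
  comm' := fun p p' _ => by
    have h : ∀ q, (LinearMap.rTensor (R := R) (A.X q) (W.d p p').hom).comp
        (LinearMap.rTensor (A.X q) (φ.f p).hom) =
      (LinearMap.rTensor (A.X q) (φ.f p').hom).comp
        (LinearMap.rTensor (A.X q) (V.d p p').hom) := by
      intro q
      rw [← LinearMap.rTensor_comp, ← LinearMap.rTensor_comp, ← ModuleCat.hom_comp,
        ← ModuleCat.hom_comp, φ.comm]
    ext q : 1
    ext1
    exact h q

/-- The induced morphism `V ⊗_R A ⟶ W ⊗_R A` of total tensor product complexes. -/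
noncomputable def tensorComplexMap (R : Type) [CommRing R]
    {V W : CochainComplex (ModuleCat.{0} R) ℤ} (φ : V ⟶ W)
    (A : CochainComplex (ModuleCat.{0} R) ℤ) :
    tensorComplex R V A ⟶ tensorComplex R W A :=
  HomologicalComplex₂.total.map (tensorBicomplexMap R φ A) (ComplexShape.up ℤ)

namespace TensorTotalAux

open HomologicalComplex₂

variable {R : Type} [CommRing R]
  (K : HomologicalComplex₂ (ModuleCat.{0} R) (ComplexShape.up ℤ) (ComplexShape.up ℤ))

noncomputable section
abbrev cπ : ℤ × ℤ → ℤ := ComplexShape.π (ComplexShape.up ℤ) (ComplexShape.up ℤ) (ComplexShape.up ℤ)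
abbrev cc := ComplexShape.up ℤ
abbrev Zfam (m : ℤ) : (cπ ⁻¹' {m}) → ModuleCat.{0} R := K.toGradedObject.mapObjFun cπ m
abbrev DS (m : ℤ) := DirectSum (cπ ⁻¹' {m}) (fun i => Zfam K m i)
abbrev eIso (m : ℤ) : (K.total cc).X m ≅ ModuleCat.of R (DS K m) :=
  ModuleCat.coprodIsoDirectSum (Zfam K m)

def toDS {m : ℤ} (x : (K.total cc).X m) : DS K m := (eIso K m).hom x

lemma toDS_linear {m : ℤ} (x y : (K.total cc).X m) : toDS K (x - y) = toDS K x - toDS K y := by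
  simp [toDS, map_sub]

def comp' {m : ℤ} (i : cπ ⁻¹' {m}) (x : (K.total cc).X m) : Zfam K m i := toDS K x i

lemma comp'_sub {m : ℤ} (i : cπ ⁻¹' {m}) (x y : (K.total cc).X m) :
    comp' K i (x - y) = comp' K i x - comp' K i y := by
  unfold comp'
  rw [toDS_linear]
  exact DFinsupp.sub_apply _ _ _

lemma iota_eq (p q m : ℤ) (h : cπ (p, q) = m) :
    K.ιTotal cc p q m h = Sigma.ι (Zfam K m) ⟨(p,q), h⟩ := rfl

lemma toDS_ι {m : ℤ} (j : cπ ⁻¹' {m}) (z : Zfam K m j) :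
    toDS K (Sigma.ι (Zfam K m) j z) = DirectSum.lof R _ (fun i => Zfam K m i) j z := by
  have h1 : Sigma.ι (Zfam K m) j ≫ (eIso K m).hom = ModuleCat.ofHom (DirectSum.lof R _ (fun i => Zfam K m i) j) :=
    ModuleCat.ι_coprodIsoDirectSum_hom _ _
  exact congrArg (fun f => (f z : DS K m)) h1

lemma comp'_ι {m : ℤ} (i j : cπ ⁻¹' {m}) (z : Zfam K m j) :
    comp' K i (Sigma.ι (Zfam K m) j z) = if h : j = i then (h ▸ z) else 0 := by
  unfold comp'
  rw [toDS_ι, DirectSum.lof_eq_of]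
  split
  · next h => subst h; exact DirectSum.of_eq_same _ _
  · next h => exact DirectSum.of_eq_of_ne _ _ _ (Ne.symm h)

lemma comp'_ι_self {m : ℤ} (j : cπ ⁻¹' {m}) (z : Zfam K m j) :
    comp' K j (Sigma.ι (Zfam K m) j z) = z := by
  rw [comp'_ι]; simp

lemma comp'_ι_ne {m : ℤ} (i j : cπ ⁻¹' {m}) (hne : j ≠ i) (z : Zfam K m j) :
    comp' K i (Sigma.ι (Zfam K m) j z) = 0 := by
  rw [comp'_ι]; simp [hne]

lemma eq_zero_of_comp' {m : ℤ} (x : (K.total cc).X m) (h : ∀ i, comp' K i x = 0) : x = 0 := by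
  have h0 : toDS K x = 0 := DFinsupp.ext (fun i => by
    rw [show ((0 : DS K m) i) = 0 from DirectSum.zero_apply _]; exact h i)
  have h2 := congrArg (eIso K m).inv h0
  rw [show (eIso K m).inv (toDS K x) = x from Iso.hom_inv_id_apply _ _, map_zero] at h2
  exact h2

lemma eq_sum (m : ℤ) (x : (K.total cc).X m) :
    ∃ s : Finset (cπ ⁻¹' {m}), x = ∑ i ∈ s, Sigma.ι (Zfam K m) i (comp' K i x) ∧
      ∀ i, comp' K i x ≠ 0 → i ∈ s := by
  classical
  refine ⟨(toDS K x).support, ?_, fun i hi => DFinsupp.mem_support_iff.mpr hi⟩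
  have h0 : ∑ i ∈ (toDS K x).support,
      DirectSum.of (fun i => Zfam K m i) i (toDS K x i) = toDS K x :=
    DirectSum.sum_support_of _
  have hc := congrArg (eIso K m).inv h0
  rw [map_sum] at hc
  have h3 : ∀ i : (cπ ⁻¹' {m}), ∀ z : Zfam K m i,
      (eIso K m).inv (DirectSum.of (fun i => Zfam K m i) i z) = Sigma.ι (Zfam K m) i z := by
    intro i z
    have h4 : ModuleCat.ofHom (DirectSum.lof R _ (fun i => Zfam K m i) i) ≫
        (eIso K m).inv = Sigma.ι (Zfam K m) i := ModuleCat.lof_coprodIsoDirectSum_inv _ _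
    have h5 := congrArg (fun f => (f z : (K.total cc).X m)) h4
    dsimp at h5
    have h6 : (DirectSum.lof R (cπ ⁻¹' {m}) (fun i => Zfam K m i) i) z
        = (DirectSum.of (fun i => Zfam K m i) i) z := DirectSum.lof_eq_of R _ _ _ _
    rw [← h6]
    exact h5
  simp only [h3] at hc
  rw [show (eIso K m).inv (toDS K x) = x from Iso.hom_inv_id_apply _ _] at hc
  exact hc.symm
end

noncomputable section
example {A B : ModuleCat.{0} R} (u : ℤˣ) (f : A ⟶ B) (x : A) : (u • f) x = u • (f x) := rfl

lemma d_ι (p q m : ℤ) (h : cπ (p,q) = m) (z : (K.X p).X q) :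
    (K.total cc).d m (m+1) (Sigma.ι (Zfam K m) ⟨(p,q),h⟩ z) =
      Sigma.ι (Zfam K (m+1)) ⟨(p+1,q), by have h' : p + q = m := h; show p+1+q = m+1; omega⟩ ((K.d p (p+1)).f q z)
      + p.negOnePow • Sigma.ι (Zfam K (m+1)) ⟨(p,q+1), by have h' : p + q = m := h; show p+(q+1) = m+1; omega⟩ ((K.X p).d q (q+1) z) := by
  have h' : p + q = m := h
  have hrel : (ComplexShape.up ℤ).Rel p (p+1) := rfl
  have hrel2 : (ComplexShape.up ℤ).Rel q (q+1) := rfl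
  have hA : cπ (p+1, q) = m+1 := by show p+1+q = m+1; omega
  have hB : cπ (p, q+1) = m+1 := by show p+(q+1) = m+1; omega
  have e1 : K.ιTotal cc p q m h ≫ (K.total cc).d m (m+1)
      = K.d₁ cc p q (m+1) + K.d₂ cc p q (m+1) := by
    rw [total_d, Preadditive.comp_add, ι_D₁, ι_D₂]
  have e2 : K.d₁ cc p q (m+1) = ComplexShape.ε₁ cc cc cc (p, q) •
      ((K.d p (p+1)).f q ≫ K.ιTotal cc (p+1) q (m+1) hA) := d₁_eq K cc hrel q (m+1) hA
  have e3 : K.d₂ cc p q (m+1) = ComplexShape.ε₂ cc cc cc (p, q) •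
      ((K.X p).d q (q+1) ≫ K.ιTotal cc p (q+1) (m+1) hB) := d₂_eq K cc p hrel2 (m+1) hB
  have eps1 : ComplexShape.ε₁ cc cc cc (p, q) = 1 := rfl
  have eps2 : ComplexShape.ε₂ cc cc cc (p, q) = p.negOnePow := rfl
  rw [eps1, one_smul] at e2
  rw [eps2] at e3
  have := congrArg (fun f => (f z : (K.total cc).X (m+1))) (e1.trans (by rw [e2, e3]))
  dsimp only at this
  have lhs : (K.ιTotal cc p q m h ≫ (K.total cc).d m (m+1)) z
      = (K.total cc).d m (m+1) (Sigma.ι (Zfam K m) ⟨(p,q),h⟩ z) := rfl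
  rw [lhs] at this
  rw [this]
  have rhs1 : ((K.d p (p+1)).f q ≫ K.ιTotal cc (p+1) q (m+1) hA +
      p.negOnePow • ((K.X p).d q (q+1) ≫ K.ιTotal cc p (q+1) (m+1) hB)) z
      = Sigma.ι (Zfam K (m+1)) ⟨(p+1,q), hA⟩ ((K.d p (p+1)).f q z)
      + p.negOnePow • Sigma.ι (Zfam K (m+1)) ⟨(p,q+1), hB⟩ ((K.X p).d q (q+1) z) := rfl
  rw [rhs1]
end

noncomputable section

lemma d_ι' (p q p' q' m m' : ℤ) (hp : p + 1 = p') (hq : q + 1 = q') (hm : m + 1 = m')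
    (h : cπ (p,q) = m) (hA : cπ (p',q) = m') (hB : cπ (p,q') = m') (z : (K.X p).X q) :
    (K.total cc).d m m' (Sigma.ι (Zfam K m) ⟨(p,q),h⟩ z) =
      Sigma.ι (Zfam K m') ⟨(p',q), hA⟩ ((K.d p p').f q z)
      + p.negOnePow • Sigma.ι (Zfam K m') ⟨(p,q'), hB⟩ ((K.X p).d q q' z) := by
  subst hp hq hm
  exact d_ι K p q m h z

lemma comp'_add {m : ℤ} (i : cπ ⁻¹' {m}) (x y : (K.total cc).X m) :
    comp' K i (x + y) = comp' K i x + comp' K i y := by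
  unfold comp' toDS
  rw [map_add]
  exact DFinsupp.add_apply _ _ _

lemma comp'_zero {m : ℤ} (i : cπ ⁻¹' {m}) : comp' K i (0 : (K.total cc).X m) = 0 := by
  unfold comp' toDS
  rw [map_zero]
  rfl

lemma comp'_sum {m : ℤ} (i : cπ ⁻¹' {m}) {α : Type} (s : Finset α)
    (v : α → (K.total cc).X m) :
    comp' K i (∑ a ∈ s, v a) = ∑ a ∈ s, comp' K i (v a) := by
  classical
  induction s using Finset.induction with
  | empty => simpa using comp'_zero K i
  | insert _ _ hns ih =>
      rw [Finset.sum_insert hns, Finset.sum_insert hns, comp'_add, ih]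

lemma hom_apply_unitsmul {A B : ModuleCat.{0} R} (f : A ⟶ B) (u : ℤˣ) (x : A) :
    f (u • x) = u • f x := by
  rw [Units.smul_def, Units.smul_def, map_zsmul]

lemma comp'_unitsmul {m : ℤ} (i : cπ ⁻¹' {m}) (u : ℤˣ) (x : (K.total cc).X m) :
    comp' K i (u • x) = u • comp' K i x := by
  unfold comp' toDS
  rw [Units.smul_def, Units.smul_def, map_zsmul]
  exact DFinsupp.smul_apply _ _ _

end

noncomputable section
open HomologicalComplex

theorem total_exactAt_of_rows
    (hrow : ∀ p q : ℤ, Function.Exact ((K.X p).d (q-1) q) ((K.X p).d q (q+1)))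
    (hbd : ∀ n : ℤ, ∃ M : ℤ, ∀ p q : ℤ, p + q = n → M ≤ p → Subsingleton ((K.X p).X q))
    (n : ℤ) : (K.total cc).ExactAt n := by
  rw [HomologicalComplex.exactAt_iff' _ (n-1) n (n+1) (by simp) (by simp)]
  rw [ShortComplex.moduleCat_exact_iff]
  intro x hx
  change ((K.total cc).d n (n+1)) x = 0 at hx
  change ∃ y, ((K.total cc).d (n-1) n) y = x
  obtain ⟨M, hM⟩ := hbd n
  have main : ∀ (j : ℕ) (k : ℤ), M ≤ k + j → ∀ x : (K.total cc).X n,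
      (K.total cc).d n (n+1) x = 0 →
      (∀ (p q : ℤ) (h : cπ (p,q) = n), p < k → comp' K ⟨(p,q),h⟩ x = 0) →
      ∃ y, (K.total cc).d (n-1) n y = x := by
    intro j
    induction j with
    | zero =>
        intro k hk x hx hsupp
        have hx0 : x = 0 := by
          apply eq_zero_of_comp' K x
          rintro ⟨⟨p, q⟩, hi⟩
          have hi' : p + q = n := hi
          by_cases hpk : p < k
          · exact hsupp p q hi hpk
          · have hss : Subsingleton ((K.X p).X q) := hM p q hi' (by omega)
            exact @Subsingleton.elim _ hss _ _
        exact ⟨0, by rw [map_zero, hx0]⟩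
    | succ j IH =>
        intro k hk x hx hsupp
        have h₀ : cπ (k, n - k) = n := show k + (n - k) = n by omega
        have hjdx : cπ (k, n - k + 1) = n + 1 := show k + (n - k + 1) = n + 1 by omega
        set i₀ : ↑(cπ ⁻¹' {n}) := (⟨(k, n - k), h₀⟩ : ↑(cπ ⁻¹' {n})) with hi₀
        set jdx : ↑(cπ ⁻¹' {n+1}) := (⟨(k, n - k + 1), hjdx⟩ : ↑(cπ ⁻¹' {n+1})) with hjdx2
        set z := comp' K i₀ x with hz
        -- Step 1 : z is a vertical cycle
        have hzd : (K.X k).d (n - k) (n - k + 1) z = 0 := by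
          obtain ⟨s, hxs, hss⟩ := eq_sum K n x
          have hDx := congrArg ((K.total cc).d n (n+1)) hxs
          erw [map_sum] at hDx
          rw [hx] at hDx
          have hcomp := congrArg (comp' K jdx) hDx
          rw [comp'_zero, comp'_sum] at hcomp
          have hval : comp' K jdx
              ((K.total cc).d n (n+1) (Sigma.ι (Zfam K n) i₀ (comp' K i₀ x)))
              = k.negOnePow • ((K.X k).d (n - k) (n - k + 1) z) := by
            rw [d_ι' K k (n-k) (k+1) (n-k+1) n (n+1) rfl rfl rfl h₀
              (show cπ (k+1, n-k) = n+1 from show (k+1) + (n-k) = n+1 by omega)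
              (show cπ (k, n-k+1) = n+1 from show k + (n-k+1) = n+1 by omega) (comp' K i₀ x)]
            erw [comp'_add, comp'_unitsmul]
            erw [comp'_ι_ne K jdx ⟨(k+1, n-k), _⟩ (by
              intro hcon
              have h1 : ((k+1 : ℤ), n-k) = (k, n-k+1) := congrArg Subtype.val hcon
              have h2 := (Prod.ext_iff.mp h1).1
              omega)]
            erw [comp'_ι_self K jdx]
            rw [zero_add, ← hz]
            rfl
          have hterm : ∀ i ∈ s, i ≠ i₀ →
              comp' K jdx ((K.total cc).d n (n+1) (Sigma.ι (Zfam K n) i (comp' K i x))) = 0 := by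
            rintro ⟨⟨p, q⟩, hi⟩ hin hne
            have hi' : p + q = n := hi
            erw [d_ι' K p q (p+1) (q+1) n (n+1) rfl rfl rfl hi
              (show cπ (p+1, q) = n+1 from show (p+1) + q = n+1 by omega)
              (show cπ (p, q+1) = n+1 from show p + (q+1) = n+1 by omega) _]
            erw [comp'_add, comp'_unitsmul]
            have hterm2 : comp' K jdx (Sigma.ι (Zfam K (n+1))
                ⟨(p, q+1), show cπ (p, q+1) = n+1 from show p + (q+1) = n+1 by omega⟩
                ((K.X p).d q (q+1) (comp' K ⟨(p,q),hi⟩ x))) = 0 := by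
              apply comp'_ι_ne
              intro hcon
              have h1 : (p, q+1) = (k, n-k+1) := congrArg Subtype.val hcon
              have h2 := Prod.ext_iff.mp h1
              apply hne
              apply Subtype.ext
              have : p = k := h2.1
              have : q = n - k := by omega
              simp only [hi₀]
              exact Prod.ext_iff.mpr ⟨by omega, by omega⟩
            erw [hterm2, smul_zero, add_zero]
            by_cases hp1 : p + 1 = k
            · have hxi0 : comp' K ⟨(p,q),hi⟩ x = 0 := hsupp p q hi (by omega)
              erw [hxi0, map_zero, map_zero, comp'_zero]
            · apply comp'_ι_ne
              intro hcon
              have h1 : (p+1, q) = (k, n-k+1) := congrArg Subtype.val hcon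
              exact hp1 (Prod.ext_iff.mp h1).1
          rw [Finset.sum_eq_single i₀ (fun i hin hne =>
            hterm i hin hne) (fun hni => by
              have hz0 : comp' K i₀ x = 0 := by
                by_contra hne0
                exact hni (hss i₀ hne0)
              erw [hz0, map_zero, map_zero, comp'_zero])] at hcomp
          rw [hval] at hcomp
          have h2 := congrArg (fun t => k.negOnePow • t) hcomp
          dsimp only at h2
          erw [smul_zero, smul_smul, Int.units_mul_self, one_smul] at h2
          exact h2.symm
        -- Step 2 : lift z vertically
        obtain ⟨w, hw⟩ := (hrow k (n-k) z).mp hzd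
        -- Step 3 : correct x by a boundary
        have hu : cπ (k, n-k-1) = n-1 := show k + (n-k-1) = n-1 by omega
        set u : (K.total cc).X (n-1) := Sigma.ι (Zfam K (n-1)) ⟨(k, n-k-1), hu⟩ (k.negOnePow • w) with hu2
        have hdvw : (K.X k).d (n-k-1) (n-k) (k.negOnePow • w) = k.negOnePow • z := by
          rw [hom_apply_unitsmul, hw]
          rfl
        have hDu := d_ι' K k (n-k-1) (k+1) (n-k) (n-1) n rfl (by omega) (by omega) hu
          (show cπ (k+1, n-k-1) = n from show (k+1) + (n-k-1) = n by omega)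
          (show cπ (k, n-k) = n from show k + (n-k) = n by omega) (k.negOnePow • w)
        rw [hdvw] at hDu
        have hsm : k.negOnePow • Sigma.ι (Zfam K n) ⟨(k, n-k),
            show cπ (k, n-k) = n from show k + (n-k) = n by omega⟩ (k.negOnePow • z)
            = Sigma.ι (Zfam K n) i₀ z := by
          rw [hom_apply_unitsmul, smul_smul, Int.units_mul_self, one_smul]
        rw [hsm] at hDu
        set x' := x - (K.total cc).d (n-1) n u with hx'2
        have hx'd : (K.total cc).d n (n+1) x' = 0 := by
          rw [hx'2, map_sub, hx]
          have hdd : (K.total cc).d n (n+1) ((K.total cc).d (n-1) n u) = 0 := by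
            have h3 := congrArg (fun f => (f u : (K.total cc).X (n+1)))
              ((K.total cc).d_comp_d (n-1) n (n+1))
            exact h3
          rw [hdd, sub_zero]
        have hsupp' : ∀ (p q : ℤ) (h : cπ (p,q) = n), p < k + 1 → comp' K ⟨(p,q),h⟩ x' = 0 := by
          intro p q h hpk
          have h' : p + q = n := h
          rw [hx'2, comp'_sub, hDu]
          erw [comp'_add]
          by_cases hpc : p < k
          · rw [hsupp p q h hpc]
            erw [comp'_ι_ne K ⟨(p,q),h⟩ _ (by
              intro hcon
              have h1 : ((k+1:ℤ), n-k-1) = (p, q) := congrArg Subtype.val hcon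
              have h2 := (Prod.ext_iff.mp h1).1
              omega)]
            erw [comp'_ι_ne K ⟨(p,q),h⟩ i₀ (by
              intro hcon
              have h1 : ((k:ℤ), n-k) = (p, q) := congrArg Subtype.val (hi₀ ▸ hcon)
              have h2 := (Prod.ext_iff.mp h1).1
              omega)]
            simp
          · have hpk2 : p = k := by omega
            subst hpk2
            have hq : q = n - p := by omega
            subst hq
            have e1 : comp' K ⟨(p, n-p), h⟩ x = z := by rw [hz]
            have e2 : comp' K ⟨(p, n-p), h⟩ (Sigma.ι (Zfam K n) i₀ z) = z :=
              comp'_ι_self K i₀ z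
            rw [e1, e2]
            erw [comp'_ι_ne K ⟨(p, n-p),h⟩ _ (by
              intro hcon
              have h1 : ((p+1:ℤ), n-p-1) = (p, n-p) := congrArg Subtype.val hcon
              have h2 := (Prod.ext_iff.mp h1).1
              omega)]
            simp
        obtain ⟨y', hy'⟩ := IH (k+1) (by omega) x' hx'd hsupp'
        refine ⟨y' + u, ?_⟩
        rw [map_add, hy', hx'2]
        abel
  obtain ⟨s, -, hss⟩ := eq_sum K n x
  have hlb : ∃ k : ℤ, ∀ i ∈ s, k ≤ (i.val.1 : ℤ) := by
    classical
    by_cases hne : (s.image (fun i => i.val.1)).Nonempty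
    · refine ⟨(s.image (fun i => i.val.1)).min' hne, fun i hi => ?_⟩
      exact Finset.min'_le _ _ (Finset.mem_image_of_mem _ hi)
    · refine ⟨0, fun i hi => absurd (Finset.mem_image_of_mem (fun i => i.val.1) hi) ?_⟩
      intro hmem
      exact hne ⟨_, hmem⟩
  obtain ⟨k, hk⟩ := hlb
  refine main (M - k).toNat k (by omega) x hx (fun p q h hpk => ?_)
  by_contra hne
  have hin := hss ⟨(p,q),h⟩ hne
  have h2 : k ≤ p := hk _ hin
  omega
end


end TensorTotalAux

/-- Let `X, Y` be complexes of `R`-modules (written cohomologically, so a complex is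
"right-bounded" in the homological sense when its components vanish in all large
cohomological degrees, and "left-bounded" when they vanish in all small cohomological
degrees), with either `X` right-bounded or `Y` left-bounded.  If the complex
`X_l ⊗_R Y` is exact for every `l`, then the total tensor product complex `X ⊗_R Y`
is exact. -/
theorem tensorComplex_exact_of_levelwise_exact
    (R : Type) [CommRing R] (X Y : CochainComplex (ModuleCat.{0} R) ℤ)
    (hbd : (∃ N : ℤ, ∀ n : ℤ, N ≤ n → IsZero (X.X n)) ∨
           (∃ N : ℤ, ∀ n : ℤ, n ≤ N → IsZero (Y.X n)))
    (hexact : ∀ l n : ℤ,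
      Function.Exact
        (LinearMap.lTensor (X.X l) ((Y.d (n - 1) n).hom : Y.X (n - 1) →ₗ[R] Y.X n))
        (LinearMap.lTensor (X.X l) ((Y.d n (n + 1)).hom : Y.X n →ₗ[R] Y.X (n + 1)))) :
    ∀ n : ℤ, (tensorComplex R X Y).ExactAt n := by
  intro n
  apply TensorTotalAux.total_exactAt_of_rows (K := tensorBicomplex R X Y)
  · intro p q
    exact hexact p q
  · intro m
    have iszero_subsingleton : ∀ (A : ModuleCat.{0} R), IsZero A → Subsingleton A := by
      intro A hA
      refine ⟨fun a b => ?_⟩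
      have h1 : (𝟙 A : A ⟶ A) = 0 := hA.eq_of_src _ _
      have h2 : ∀ c : A, c = 0 := fun c => by
        have := congrArg (fun f => (f c : A)) h1
        simpa using this
      rw [h2 a, h2 b]
    rcases hbd with ⟨N, hN⟩ | ⟨N, hN⟩
    · refine ⟨N, fun p q hpq hNp => ?_⟩
      haveI : Subsingleton (X.X p) := iszero_subsingleton _ (hN p hNp)
      exact (inferInstance : Subsingleton (X.X p ⊗[R] Y.X q))
    · refine ⟨m - N, fun p q hpq hNp => ?_⟩
      haveI : Subsingleton (Y.X q) := iszero_subsingleton _ (hN q (by omega))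
      exact (inferInstance : Subsingleton (X.X p ⊗[R] Y.X q))
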